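/- For every integer n ≥ 2, (P_n)^(2/n) > (P_{n-1})^(1/(n-1)) · (P_{n+1})^(1/(n+1)); that is, the sequence {P_n^(1/n)}_{n≥1} is strictly log-concave. -/

import Mathlib

lemma key_log (a b c N : ℝ) (ha : 0 < a) (hb : 0 < b) (hc : 0 < c) (hN : 2 ≤ N)
    (h : N*(N+1)*Real.log b + N*(N-1)*Real.log c < 2*(N^2-1)*Real.log a) :
    a ^ ((2:ℝ)/N) > b ^ ((1:ℝ)/(N-1)) * c ^ ((1:ℝ)/(N+1)) := by
  have h1 : (0:ℝ) < N - 1 := by linarith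
  have h2 : (0:ℝ) < N + 1 := by linarith
  have h0 : (0:ℝ) < N := by linarith
  rw [Real.rpow_def_of_pos ha, Real.rpow_def_of_pos hb, Real.rpow_def_of_pos hc, ← Real.exp_add]
  apply Real.exp_lt_exp.2
  have hd : (0:ℝ) < N*(N-1)*(N+1) := by positivity
  have key : Real.log a * ((2:ℝ)/N) - (Real.log b * ((1:ℝ)/(N-1)) + Real.log c * ((1:ℝ)/(N+1)))
      = (2*(N^2-1)*Real.log a - (N*(N+1)*Real.log b + N*(N-1)*Real.log c)) / (N*(N-1)*(N+1)) := by
    field_simp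
    ring
  have := div_pos (by linarith : (0:ℝ) < 2*(N^2-1)*Real.log a - (N*(N+1)*Real.log b + N*(N-1)*Real.log c)) hd
  linarith [key ▸ this]

lemma key_nat (n a b c : ℕ) (hn : 2 ≤ n) (ha : 0 < a) (hb : 0 < b) (hc : 0 < c)
    (h : b ^ (n*(n+1)) * c ^ (n*(n-1)) < a ^ (2*(n*n-1))) :
    (a:ℝ) ^ ((2:ℝ)/(n:ℝ)) > (b:ℝ) ^ ((1:ℝ)/((n:ℝ)-1)) * (c:ℝ) ^ ((1:ℝ)/((n:ℝ)+1)) := by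
  obtain ⟨m, rfl⟩ : ∃ m, n = m + 2 := ⟨n - 2, by omega⟩
  have hb' : (0:ℝ) < b := by exact_mod_cast hb
  have hc' : (0:ℝ) < c := by exact_mod_cast hc
  have ha' : (0:ℝ) < a := by exact_mod_cast ha
  apply key_log _ _ _ _ ha' hb' hc' (by push_cast; linarith [Nat.cast_nonneg (α := ℝ) m])
  have e1 : (m+2)*((m+2)+1) = m*m+5*m+6 := by ring
  have e2 : (m+2)*((m+2)-1) = m*m+3*m+2 := by simp [Nat.add_sub_cancel]; ring
  have e3 : 2*((m+2)*(m+2)-1) = 2*(m*m)+8*m+6 := by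
    have : (m+2)*(m+2) = m*m+4*m+4 := by ring
    omega
  rw [e1, e2, e3] at h
  have h3 : ((b:ℝ))^(m*m+5*m+6) * (c:ℝ)^(m*m+3*m+2) < (a:ℝ)^(2*(m*m)+8*m+6) := by
    exact_mod_cast h
  have h4 := Real.log_lt_log (by positivity) h3
  rw [Real.log_mul (by positivity) (by positivity), Real.log_pow, Real.log_pow, Real.log_pow] at h4
  push_cast at h4 ⊢
  nlinarith [h4]


lemma upperB (P : ℕ → ℝ)
    (hPrec : ∀ n : ℕ, 1 ≤ n →
      ((n : ℝ) + 1) ^ 2 * P (n + 1)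
        = 8 * (3 * (n : ℝ) ^ 2 + 3 * (n : ℝ) + 1) * P n - 128 * (n : ℝ) ^ 2 * P (n - 1))
    (hPpos : ∀ n : ℕ, 0 < P n)
    (h4 : P 4 = 10816) (h5 : P 5 = 137728) :
    ∀ n : ℕ, 5 ≤ n → (n:ℝ) * P n ≤ 16*((n:ℝ)-1)*P (n-1) := by
  intro n hn
  induction n, hn using Nat.le_induction with
  | base => norm_num [h4, h5]
  | succ n hn ih =>
    have hN : (5:ℝ) ≤ (n:ℝ) := by exact_mod_cast hn
    have hE := hPrec n (by omega)
    have hx := hPpos (n-1)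
    have hy := hPpos n
    have hz := hPpos (n+1)
    have hE' : ((n:ℝ)-1) * (((n:ℝ)+1)^2 * P (n+1))
        = ((n:ℝ)-1) * (8*(3*(n:ℝ)^2+3*(n:ℝ)+1)*P n - 128*(n:ℝ)^2*P (n-1)) := by rw [hE]
    have ih8 : 8*(n:ℝ)^2*((n:ℝ) * P n) ≤ 8*(n:ℝ)^2*(16*((n:ℝ)-1)*P (n-1)) :=
      mul_le_mul_of_nonneg_left ih (by positivity)
    have step : ((n:ℝ)-1)*(((n:ℝ)+1)^2 * P (n+1)) ≤ (16*(n:ℝ)^3 - 16*(n:ℝ) - 8) * P n := by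
      nlinarith [hE', ih8]
    have h2 : ((n:ℝ)^2-1)*(((n:ℝ)+1) * P (n+1)) ≤ ((n:ℝ)^2-1)*(16*(n:ℝ)* P n) := by
      nlinarith [step, hy.le]
    have hpos : (0:ℝ) < (n:ℝ)^2-1 := by nlinarith
    have := (mul_le_mul_iff_right₀ hpos).mp h2
    push_cast
    simpa using this

lemma lowerB (P : ℕ → ℝ)
    (hPrec : ∀ n : ℕ, 1 ≤ n →
      ((n : ℝ) + 1) ^ 2 * P (n + 1)
        = 8 * (3 * (n : ℝ) ^ 2 + 3 * (n : ℝ) + 1) * P n - 128 * (n : ℝ) ^ 2 * P (n - 1))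
    (hPpos : ∀ n : ℕ, 0 < P n)
    (h4 : P 4 = 10816) (h5 : P 5 = 137728) :
    ∀ n : ℕ, 5 ≤ n → 16*((n:ℝ)-2)*P (n-1) ≤ ((n:ℝ)-1) * P n := by
  intro n hn
  induction n, hn using Nat.le_induction with
  | base => norm_num [h4, h5]
  | succ n hn ih =>
    have hN : (5:ℝ) ≤ (n:ℝ) := by exact_mod_cast hn
    have hE := hPrec n (by omega)
    have hx := hPpos (n-1)
    have hy := hPpos n
    have hz := hPpos (n+1)
    have hE' : ((n:ℝ)-2) * (((n:ℝ)+1)^2 * P (n+1))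
        = ((n:ℝ)-2) * (8*(3*(n:ℝ)^2+3*(n:ℝ)+1)*P n - 128*(n:ℝ)^2*P (n-1)) := by rw [hE]
    have ih8 : 8*(n:ℝ)^2*(16*((n:ℝ)-2)*P (n-1)) ≤ 8*(n:ℝ)^2*(((n:ℝ)-1) * P n) :=
      mul_le_mul_of_nonneg_left ih (by positivity)
    have step : 8*(2*(n:ℝ)^3-2*(n:ℝ)^2-5*(n:ℝ)-2) * P n ≤ ((n:ℝ)-2)*(((n:ℝ)+1)^2 * P (n+1)) := by
      nlinarith [hE', ih8]
    have stepN : (n:ℝ)*(8*(2*(n:ℝ)^3-2*(n:ℝ)^2-5*(n:ℝ)-2) * P n)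
        ≤ (n:ℝ)*(((n:ℝ)-2)*(((n:ℝ)+1)^2 * P (n+1))) :=
      mul_le_mul_of_nonneg_left step (by positivity)
    have h44 : (0:ℝ) ≤ ((n:ℝ)^2-4*(n:ℝ)-4) * (8 * P n) := by
      apply mul_nonneg _ (by positivity)
      nlinarith
    have h2 : (((n:ℝ)-2)*((n:ℝ)+1)^2)*(16*((n:ℝ)-1)*P n) ≤ (((n:ℝ)-2)*((n:ℝ)+1)^2)*((n:ℝ) * P (n+1)) := by
      nlinarith [stepN, h44]
    have hpos : (0:ℝ) < ((n:ℝ)-2)*((n:ℝ)+1)^2 := by nlinarith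
    have := (mul_le_mul_iff_right₀ hpos).mp h2
    push_cast
    linarith [this]

lemma prodB (P : ℕ → ℝ)
    (hup : ∀ n : ℕ, 5 ≤ n → (n:ℝ) * P n ≤ 16*((n:ℝ)-1)*P (n-1))
    (h4 : P 4 = 10816) :
    ∀ n : ℕ, 4 ≤ n → (n:ℝ) * P n ≤ 43264 * 16^(n-4) := by
  intro n hn
  induction n, hn using Nat.le_induction with
  | base => norm_num [h4]
  | succ n hn ih =>
    have hu := hup (n+1) (by omega)
    push_cast at hu
    rw [show (n+1)-4 = (n-4)+1 from by omega, pow_succ]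
    push_cast
    linarith [hu, ih]


lemma analyticB (P : ℕ → ℝ) (hPpos : ∀ n : ℕ, 0 < P n)
    (hlo : ∀ n : ℕ, 5 ≤ n → 16*((n:ℝ)-2)*P (n-1) ≤ ((n:ℝ)-1) * P n)
    (hup : ∀ n : ℕ, 5 ≤ n → (n:ℝ) * P n ≤ 16*((n:ℝ)-1)*P (n-1))
    (hpr : ∀ n : ℕ, 4 ≤ n → (n:ℝ) * P n ≤ 43264 * 16^(n-4))
    (n : ℕ) (hn : 16 ≤ n) :
    (n:ℝ)*((n:ℝ)+1)*Real.log (P (n-1)) + (n:ℝ)*((n:ℝ)-1)*Real.log (P (n+1))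
      < 2*((n:ℝ)^2-1)*Real.log (P n) := by
  have hN : (16:ℝ) ≤ (n:ℝ) := by exact_mod_cast hn
  have hx := hPpos (n-1)
  have hy := hPpos n
  have hz := hPpos (n+1)
  set La := Real.log (P n) with hLa
  set Lb := Real.log (P (n-1)) with hLb
  set Lc := Real.log (P (n+1)) with hLc
  set L16 := Real.log 16 with hL16
  set LC := Real.log 43264 with hLC
  set LN := Real.log (n:ℝ) with hLN
  have hN2 : (0:ℝ) < (n:ℝ) - 2 := by linarith
  have hN1 : (0:ℝ) < (n:ℝ) + 1 := by linarith
  have hN0 : (0:ℝ) < (n:ℝ) := by linarith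
  -- e1 : L16 - 1/(N-2) ≤ La - Lb
  have e1 : L16 - 1/((n:ℝ)-2) ≤ La - Lb := by
    have h := Real.log_le_log (mul_pos (mul_pos (by norm_num : (0:ℝ) < 16) hN2) hx) (hlo n (by omega))
    rw [Real.log_mul (ne_of_gt (mul_pos (by norm_num : (0:ℝ) < 16) hN2)) (ne_of_gt hx),
        Real.log_mul (by norm_num : (16:ℝ) ≠ 0) (ne_of_gt hN2),
        Real.log_mul (ne_of_gt (by linarith : (0:ℝ) < (n:ℝ)-1)) (ne_of_gt hy)] at h
    -- h : log 16 + log (N-2) + Lb ≤ log (N-1) + La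
    have h2 : Real.log (((n:ℝ)-1)/((n:ℝ)-2)) ≤ ((n:ℝ)-1)/((n:ℝ)-2) - 1 :=
      Real.log_le_sub_one_of_pos (div_pos (by linarith) hN2)
    rw [Real.log_div (by linarith) (by linarith)] at h2
    have h3 : ((n:ℝ)-1)/((n:ℝ)-2) - 1 = 1/((n:ℝ)-2) := by
      rw [div_sub' (ne_of_gt hN2)]; ring_nf
    rw [h3] at h2
    linarith
  -- e2 : Lc - La ≤ L16 - 1/(N+1)
  have e2 : Lc - La ≤ L16 - 1/((n:ℝ)+1) := by
    have hu := hup (n+1) (by omega)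
    push_cast at hu
    have hu' : ((n:ℝ)+1) * P (n+1) ≤ 16*(n:ℝ) * P n := by linarith
    have h := Real.log_le_log (by positivity) hu'
    rw [Real.log_mul (ne_of_gt hN1) (ne_of_gt hz),
        Real.log_mul (ne_of_gt (mul_pos (by norm_num : (0:ℝ) < 16) hN0)) (ne_of_gt hy),
        Real.log_mul (by norm_num : (16:ℝ) ≠ 0) (ne_of_gt hN0)] at h
    -- h : log (N+1) + Lc ≤ log 16 + log N + La
    have h2 : Real.log ((n:ℝ)/((n:ℝ)+1)) ≤ (n:ℝ)/((n:ℝ)+1) - 1 :=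
      Real.log_le_sub_one_of_pos (div_pos hN0 hN1)
    rw [Real.log_div (ne_of_gt hN0) (ne_of_gt hN1)] at h2
    have h3 : (n:ℝ)/((n:ℝ)+1) - 1 = -(1/((n:ℝ)+1)) := by
      rw [div_sub' (ne_of_gt hN1)]; ring_nf
    rw [h3] at h2
    linarith
  -- e3 : La ≤ LC + (N-4)*L16 - LN
  have e3 : La ≤ LC + ((n:ℝ)-4)*L16 - LN := by
    have h := Real.log_le_log (by positivity) (hpr n (by omega))
    rw [Real.log_mul (ne_of_gt hN0) (ne_of_gt hy),
        Real.log_mul (by norm_num) (by positivity), Real.log_pow] at h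
    have hc : ((n-4:ℕ):ℝ) = (n:ℝ) - 4 := by
      rw [Nat.cast_sub (by omega)]; norm_num
    rw [hc] at h
    linarith
  -- e4 : LC ≤ 4*L16 - 87/256
  have e4 : LC ≤ 4*L16 - 87/256 := by
    have h2 : Real.log ((43264:ℝ)/65536) ≤ (43264:ℝ)/65536 - 1 :=
      Real.log_le_sub_one_of_pos (by norm_num)
    rw [Real.log_div (by norm_num) (by norm_num)] at h2
    have h65 : Real.log (65536:ℝ) = 4*L16 := by
      rw [show (65536:ℝ) = 16^(4:ℕ) from by norm_num, Real.log_pow]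
      push_cast; ring
    rw [h65] at h2
    have : (43264:ℝ)/65536 - 1 = -(87/256) := by norm_num
    linarith [this ▸ h2]
  -- e5 : 2.772 ≤ LN
  have e5 : (2.772:ℝ) ≤ LN := by
    have h1 : L16 ≤ LN := Real.log_le_log (by norm_num) hN
    have h2 : L16 = 4 * Real.log 2 := by
      rw [hL16, show (16:ℝ) = 2^(4:ℕ) from by norm_num, Real.log_pow]
      push_cast; ring
    have := Real.log_two_gt_d9
    linarith
  -- e6
  have e6 : (n:ℝ)*((n:ℝ)+1)*(1/((n:ℝ)-2)) - (n:ℝ)*((n:ℝ)-1)*(1/((n:ℝ)+1)) ≤ 5.32 := by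
    rw [show (n:ℝ)*((n:ℝ)+1)*(1/((n:ℝ)-2)) - (n:ℝ)*((n:ℝ)-1)*(1/((n:ℝ)+1))
        = ((n:ℝ)*((n:ℝ)+1)^2 - (n:ℝ)*((n:ℝ)-1)*((n:ℝ)-2))/(((n:ℝ)-2)*((n:ℝ)+1)) from by
      field_simp]
    rw [div_le_iff₀ (by positivity)]
    nlinarith [hN]
  have m1 : (n:ℝ)*((n:ℝ)+1)*(L16 - 1/((n:ℝ)-2)) ≤ (n:ℝ)*((n:ℝ)+1)*(La - Lb) :=
    mul_le_mul_of_nonneg_left e1 (by positivity)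
  have m2 : (n:ℝ)*((n:ℝ)-1)*(Lc - La) ≤ (n:ℝ)*((n:ℝ)-1)*(L16 - 1/((n:ℝ)+1)) :=
    mul_le_mul_of_nonneg_left e2 (by nlinarith)
  nlinarith [m1, m2, e3, e4, e5, e6]

set_option maxHeartbeats 1000000 in
theorem Pn_root_log_concave (P : ℕ → ℝ)
    (hP0 : P 0 = 1) (hP1 : P 1 = 8)
    (hPrec : ∀ n : ℕ, 1 ≤ n →
      ((n : ℝ) + 1) ^ 2 * P (n + 1)
        = 8 * (3 * (n : ℝ) ^ 2 + 3 * (n : ℝ) + 1) * P n - 128 * (n : ℝ) ^ 2 * P (n - 1))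
    (hPpos : ∀ n : ℕ, 0 < P n) :
    ∀ n : ℕ, 2 ≤ n →
      P n ^ ((2 : ℝ) / (n : ℝ))
        > P (n - 1) ^ ((1 : ℝ) / ((n : ℝ) - 1)) * P (n + 1) ^ ((1 : ℝ) / ((n : ℝ) + 1)) := by
  have hv0 := hP0
  have hv1 := hP1
  have hv2 : P 2 = 80 := by
    have h := hPrec 1 (by norm_num)
    norm_num [hv0, hv1] at h
    linarith
  have hv3 : P 3 = 896 := by
    have h := hPrec 2 (by norm_num)
    norm_num [hv1, hv2] at h
    linarith
  have hv4 : P 4 = 10816 := by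
    have h := hPrec 3 (by norm_num)
    norm_num [hv2, hv3] at h
    linarith
  have hv5 : P 5 = 137728 := by
    have h := hPrec 4 (by norm_num)
    norm_num [hv3, hv4] at h
    linarith
  have hv6 : P 6 = 1823744 := by
    have h := hPrec 5 (by norm_num)
    norm_num [hv4, hv5] at h
    linarith
  have hv7 : P 7 = 24862720 := by
    have h := hPrec 6 (by norm_num)
    norm_num [hv5, hv6] at h
    linarith
  have hv8 : P 8 = 346498048 := by
    have h := hPrec 7 (by norm_num)
    norm_num [hv6, hv7] at h
    linarith
  have hv9 : P 9 = 4911669248 := by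
    have h := hPrec 8 (by norm_num)
    norm_num [hv7, hv8] at h
    linarith
  have hv10 : P 10 = 70560071680 := by
    have h := hPrec 9 (by norm_num)
    norm_num [hv8, hv9] at h
    linarith
  have hv11 : P 11 = 1024576061440 := by
    have h := hPrec 10 (by norm_num)
    norm_num [hv9, hv10] at h
    linarith
  have hv12 : P 12 = 15008466534400 := by
    have h := hPrec 11 (by norm_num)
    norm_num [hv10, hv11] at h
    linarith
  have hv13 : P 13 = 221460239482880 := by
    have h := hPrec 12 (by norm_num)
    norm_num [hv11, hv12] at h
    linarith
  have hv14 : P 14 = 3287994183188480 := by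
    have h := hPrec 13 (by norm_num)
    norm_num [hv12, hv13] at h
    linarith
  have hv15 : P 15 = 49074667327062016 := by
    have h := hPrec 14 (by norm_num)
    norm_num [hv13, hv14] at h
    linarith
  have hv16 : P 16 = 735814252604162048 := by
    have h := hPrec 15 (by norm_num)
    norm_num [hv14, hv15] at h
    linarith
  have hlo := lowerB P hPrec hPpos hv4 hv5
  have hup := upperB P hPrec hPpos hv4 hv5
  have hpr := prodB P hup hv4
  intro n hn
  by_cases h16 : n < 16
  · interval_cases n
    · -- n = 2
      simp only [show (2:ℕ)-1 = 1 from rfl, show (2:ℕ)+1 = 3 from rfl, hv1, hv2, hv3]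
      exact_mod_cast key_nat 2 80 8 896 (by norm_num) (by norm_num) (by norm_num) (by norm_num) (by norm_num)
    · -- n = 3
      simp only [show (3:ℕ)-1 = 2 from rfl, show (3:ℕ)+1 = 4 from rfl, hv2, hv3, hv4]
      exact_mod_cast key_nat 3 896 80 10816 (by norm_num) (by norm_num) (by norm_num) (by norm_num) (by norm_num)
    · -- n = 4
      simp only [show (4:ℕ)-1 = 3 from rfl, show (4:ℕ)+1 = 5 from rfl, hv3, hv4, hv5]
      exact_mod_cast key_nat 4 10816 896 137728 (by norm_num) (by norm_num) (by norm_num) (by norm_num) (by norm_num)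
    · -- n = 5
      simp only [show (5:ℕ)-1 = 4 from rfl, show (5:ℕ)+1 = 6 from rfl, hv4, hv5, hv6]
      exact_mod_cast key_nat 5 137728 10816 1823744 (by norm_num) (by norm_num) (by norm_num) (by norm_num) (by norm_num)
    · -- n = 6
      simp only [show (6:ℕ)-1 = 5 from rfl, show (6:ℕ)+1 = 7 from rfl, hv5, hv6, hv7]
      exact_mod_cast key_nat 6 1823744 137728 24862720 (by norm_num) (by norm_num) (by norm_num) (by norm_num) (by norm_num)
    · -- n = 7
      simp only [show (7:ℕ)-1 = 6 from rfl, show (7:ℕ)+1 = 8 from rfl, hv6, hv7, hv8]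
      exact_mod_cast key_nat 7 24862720 1823744 346498048 (by norm_num) (by norm_num) (by norm_num) (by norm_num) (by norm_num)
    · -- n = 8
      simp only [show (8:ℕ)-1 = 7 from rfl, show (8:ℕ)+1 = 9 from rfl, hv7, hv8, hv9]
      exact_mod_cast key_nat 8 346498048 24862720 4911669248 (by norm_num) (by norm_num) (by norm_num) (by norm_num) (by norm_num)
    · -- n = 9
      simp only [show (9:ℕ)-1 = 8 from rfl, show (9:ℕ)+1 = 10 from rfl, hv8, hv9, hv10]
      exact_mod_cast key_nat 9 4911669248 346498048 70560071680 (by norm_num) (by norm_num) (by norm_num) (by norm_num) (by norm_num)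
    · -- n = 10
      simp only [show (10:ℕ)-1 = 9 from rfl, show (10:ℕ)+1 = 11 from rfl, hv9, hv10, hv11]
      exact_mod_cast key_nat 10 70560071680 4911669248 1024576061440 (by norm_num) (by norm_num) (by norm_num) (by norm_num) (by norm_num)
    · -- n = 11
      simp only [show (11:ℕ)-1 = 10 from rfl, show (11:ℕ)+1 = 12 from rfl, hv10, hv11, hv12]
      exact_mod_cast key_nat 11 1024576061440 70560071680 15008466534400 (by norm_num) (by norm_num) (by norm_num) (by norm_num) (by norm_num)
    · -- n = 12
      simp only [show (12:ℕ)-1 = 11 from rfl, show (12:ℕ)+1 = 13 from rfl, hv11, hv12, hv13]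
      exact_mod_cast key_nat 12 15008466534400 1024576061440 221460239482880 (by norm_num) (by norm_num) (by norm_num) (by norm_num) (by decide +kernel)
    · -- n = 13
      simp only [show (13:ℕ)-1 = 12 from rfl, show (13:ℕ)+1 = 14 from rfl, hv12, hv13, hv14]
      exact_mod_cast key_nat 13 221460239482880 15008466534400 3287994183188480 (by norm_num) (by norm_num) (by norm_num) (by norm_num) (by decide +kernel)
    · -- n = 14
      simp only [show (14:ℕ)-1 = 13 from rfl, show (14:ℕ)+1 = 15 from rfl, hv13, hv14, hv15]
      exact_mod_cast key_nat 14 3287994183188480 221460239482880 49074667327062016 (by norm_num) (by norm_num) (by norm_num) (by norm_num) (by decide +kernel)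
    · -- n = 15
      simp only [show (15:ℕ)-1 = 14 from rfl, show (15:ℕ)+1 = 16 from rfl, hv14, hv15, hv16]
      exact_mod_cast key_nat 15 49074667327062016 3287994183188480 735814252604162048 (by norm_num) (by norm_num) (by norm_num) (by norm_num) (by decide +kernel)
  · push_neg at h16
    exact key_log _ _ _ _ (hPpos n) (hPpos (n-1)) (hPpos (n+1))
      (by exact_mod_cast (by omega : 2 ≤ n))
      (analyticB P hPpos hlo hup hpr n h16)
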